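/- Let Q be a left quasigroup and α, β congruences such that the centralizing relation C(α,β;0_Q) holds (in the sense of commutator theory). Then [Dis_α, Dis_β] = 1 and α ≤ σ_{Dis_β}, where x σ_N y means N_x = N_y. In particular, if α ≤ ζ_Q (the center of Q) then Dis_α is contained in the center of Dis(Q) and α ≤ σ_Q. -/

import Mathlib

/-! Basic theory of left quasigroups, following the paper. -/

structure LeftQuasigroup (Q : Type*) where
  op : Q → Q → Q
  ld : Q → Q → Q
  op_ld : ∀ x y, op x (ld x y) = y
  ld_op : ∀ x y, ld x (op x y) = y

/-- Orbit relation of a subgroup of permutations. -/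
def orbRel {Q : Type*} (N : Subgroup (Equiv.Perm Q)) (x y : Q) : Prop := ∃ h ∈ N, h y = x

/-- Orbit equivalence relation of a subgroup of permutations. -/
def orbSetoid {Q : Type*} (N : Subgroup (Equiv.Perm Q)) : Setoid Q where
  r := orbRel N
  iseqv := by
    constructor
    · exact fun x => ⟨1, N.one_mem, rfl⟩
    · rintro x y ⟨h, hN, rfl⟩
      exact ⟨h⁻¹, N.inv_mem hN, Equiv.symm_apply_apply h y⟩
    · rintro x y z ⟨h, hN, rfl⟩ ⟨g, gN, rfl⟩
      exact ⟨h * g, N.mul_mem hN gN, rfl⟩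

/-- The subgroup of permutations moving every point inside its `α`-class. -/
def kerRel {Q : Type*} (α : Setoid Q) : Subgroup (Equiv.Perm Q) where
  carrier := {g | ∀ x, α.r (g x) x}
  one_mem' := fun x => α.refl x
  mul_mem' := by
    intro a b ha hb x
    exact α.trans (ha (b x)) (hb x)
  inv_mem' := by
    intro a ha x
    have := ha (a⁻¹ x)
    rw [show a (a⁻¹ x) = x from Equiv.apply_symm_apply a x] at this
    exact α.symm this

/-- Pointwise stabilizer of `x` in `N`. -/
def pstab {Q : Type*} (N : Subgroup (Equiv.Perm Q)) (x : Q) : Subgroup (Equiv.Perm Q) :=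
  N ⊓ MulAction.stabilizer (Equiv.Perm Q) x

/-- Meet of a family of setoids. -/
def infSetoid {Q I : Type*} (α : I → Setoid Q) : Setoid Q where
  r x y := ∀ i, (α i).r x y
  iseqv := ⟨fun x i => (α i).refl x, fun h i => (α i).symm (h i),
    fun h g i => (α i).trans (h i) (g i)⟩

namespace LeftQuasigroup

variable {Q : Type*} (S : LeftQuasigroup Q)

/-- Left translation as a permutation. -/
def L (x : Q) : Equiv.Perm Q := ⟨S.op x, S.ld x, S.ld_op x, S.op_ld x⟩

/-- The left multiplication group. -/
def LMlt : Subgroup (Equiv.Perm Q) := Subgroup.closure (Set.range S.L)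

/-- The displacement group relative to a binary relation `r`. -/
def disRel (r : Q → Q → Prop) : Subgroup (Equiv.Perm Q) :=
  Subgroup.closure {g | ∃ h ∈ S.LMlt, ∃ x y, r x y ∧ g = h * (S.L x * (S.L y)⁻¹) * h⁻¹}

/-- The displacement group. -/
def Dis : Subgroup (Equiv.Perm Q) := S.disRel fun _ _ => True

/-- `Dis^α`. -/
def disUp (α : Setoid Q) : Subgroup (Equiv.Perm Q) := S.Dis ⊓ kerRel α

/-- `LMlt^α`, the kernel of `π_α`. -/
def lmltKer (α : Setoid Q) : Subgroup (Equiv.Perm Q) := S.LMlt ⊓ kerRel α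

/-- Congruences of a left quasigroup. -/
structure IsCongruence (α : Setoid Q) : Prop where
  op_compat : ∀ {x y z w : Q}, α.r x y → α.r z w → α.r (S.op x z) (S.op y w)
  ld_compat : ∀ {x y z w : Q}, α.r x y → α.r z w → α.r (S.ld x z) (S.ld y w)

theorem L_mem_lmlt (x : Q) : S.L x ∈ S.LMlt := Subgroup.subset_closure ⟨x, rfl⟩

theorem disRel_le_lmlt (r : Q → Q → Prop) : S.disRel r ≤ S.LMlt := by
  refine (Subgroup.closure_le _).2 ?_
  rintro g ⟨h, hh, x, y, _, rfl⟩
  exact mul_mem (mul_mem hh (mul_mem (S.L_mem_lmlt x) (inv_mem (S.L_mem_lmlt y)))) (inv_mem hh)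

theorem lmlt_maps {α : Setoid Q} (hα : S.IsCongruence α) {g : Equiv.Perm Q}
    (hg : g ∈ S.LMlt) : ∀ x y, α.r x y → α.r (g x) (g y) := by
  have H : ∀ g ∈ S.LMlt,
      (∀ x y, α.r x y → α.r (g x) (g y)) ∧ (∀ x y, α.r x y → α.r (g⁻¹ x) (g⁻¹ y)) := by
    intro g hg
    induction hg using Subgroup.closure_induction with
    | mem g hgen =>
      obtain ⟨z, rfl⟩ := hgen
      constructor
      · intro x y h; exact hα.op_compat (α.refl z) h
      · intro x y h; exact hα.ld_compat (α.refl z) h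
    | one =>
      constructor <;> intro x y h <;> simpa using h
    | mul a b _ _ ha hb =>
      constructor
      · intro x y h
        exact ha.1 _ _ (hb.1 _ _ h)
      · intro x y h
        have := hb.2 _ _ (ha.2 _ _ h)
        simpa [mul_inv_rev] using this
    | inv a _ ha =>
      refine ⟨ha.2, ?_⟩
      intro x y h
      simpa using ha.1 x y h
  exact (H g hg).1

/-- The blockwise stabilizer `Dis(Q)_{[x]_α}`. -/
def blockStab (α : Setoid Q) (hα : S.IsCongruence α) (x : Q) : Subgroup (Equiv.Perm Q) where
  carrier := {g | g ∈ S.Dis ∧ α.r (g x) x}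
  one_mem' := ⟨S.Dis.one_mem, α.refl x⟩
  mul_mem' := by
    intro a b ha hb
    refine ⟨S.Dis.mul_mem ha.1 hb.1, ?_⟩
    exact α.trans (S.lmlt_maps hα (S.disRel_le_lmlt _ ha.1) _ _ hb.2) ha.2
  inv_mem' := by
    intro a ha
    refine ⟨S.Dis.inv_mem ha.1, ?_⟩
    have h2 := S.lmlt_maps hα (inv_mem (S.disRel_le_lmlt _ ha.1)) _ _ ha.2
    rw [show a⁻¹ (a x) = x from Equiv.symm_apply_apply a x] at h2
    exact α.symm h2

/-- The admissible subgroups `Norm(Q)`. -/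
def Norm : Set (Subgroup (Equiv.Perm Q)) :=
  {N | N ≤ S.LMlt ∧ (∀ h ∈ S.LMlt, ∀ n ∈ N, h * n * h⁻¹ ∈ N) ∧ S.disRel (orbRel N) ≤ N}

/-- Image of a subgroup along the canonical projection `π_α`. -/
def piSub (α : Setoid Q) (N : Subgroup (Equiv.Perm Q)) : Subgroup (Equiv.Perm (Quotient α)) where
  carrier := {k | ∃ h ∈ N, ∀ x : Q, k (Quotient.mk α x) = Quotient.mk α (h x)}
  one_mem' := ⟨1, N.one_mem, fun _ => rfl⟩
  mul_mem' := by
    rintro a b ⟨ha, haN, hae⟩ ⟨hb, hbN, hbe⟩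
    refine ⟨ha * hb, N.mul_mem haN hbN, fun x => ?_⟩
    show a (b (Quotient.mk α x)) = _
    rw [hbe, hae]; rfl
  inv_mem' := by
    rintro a ⟨h, hN, he⟩
    refine ⟨h⁻¹, N.inv_mem hN, fun x => ?_⟩
    have h1 := he (h⁻¹ x)
    rw [show h (h⁻¹ x) = x from Equiv.apply_symm_apply h x] at h1
    rw [← h1, show a⁻¹ (a (Quotient.mk α (h⁻¹ x))) = Quotient.mk α (h⁻¹ x) from
      Equiv.symm_apply_apply a _]

/-- Preimage of a subgroup along the canonical projection `π_α`. -/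
def piPre (α : Setoid Q) (K : Subgroup (Equiv.Perm (Quotient α))) : Subgroup (Equiv.Perm Q) where
  carrier := {h | h ∈ S.LMlt ∧ ∃ k ∈ K, ∀ x : Q, k (Quotient.mk α x) = Quotient.mk α (h x)}
  one_mem' := ⟨S.LMlt.one_mem, 1, K.one_mem, fun _ => rfl⟩
  mul_mem' := by
    rintro a b ⟨haL, ka, kaK, hae⟩ ⟨hbL, kb, kbK, hbe⟩
    refine ⟨S.LMlt.mul_mem haL hbL, ka * kb, K.mul_mem kaK kbK, fun x => ?_⟩
    show ka (kb (Quotient.mk α x)) = _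
    rw [hbe, hae]; rfl
  inv_mem' := by
    rintro a ⟨haL, k, kK, he⟩
    refine ⟨S.LMlt.inv_mem haL, k⁻¹, K.inv_mem kK, fun x => ?_⟩
    have h1 := he (a⁻¹ x)
    rw [show a (a⁻¹ x) = x from Equiv.apply_symm_apply a x] at h1
    rw [← h1, show k⁻¹ (k (Quotient.mk α (a⁻¹ x))) = Quotient.mk α (a⁻¹ x) from
      Equiv.symm_apply_apply k _]

/-- Quotient left quasigroup. -/
def quotLQ (α : Setoid Q) (hα : S.IsCongruence α) : LeftQuasigroup (Quotient α) where
  op := Quotient.lift₂ (fun x y => Quotient.mk α (S.op x y))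
    (fun _ _ _ _ h1 h2 => Quotient.sound (hα.op_compat h1 h2))
  ld := Quotient.lift₂ (fun x y => Quotient.mk α (S.ld x y))
    (fun _ _ _ _ h1 h2 => Quotient.sound (hα.ld_compat h1 h2))
  op_ld := fun a b => Quotient.inductionOn₂ a b fun x y => congrArg (Quotient.mk α) (S.op_ld x y)
  ld_op := fun a b => Quotient.inductionOn₂ a b fun x y => congrArg (Quotient.mk α) (S.ld_op x y)

/-- Idempotent left quasigroup. -/
def Idem : Prop := ∀ x : Q, S.op x x = x

/-- Left distributive law (defining quandles among idempotent left quasigroups). -/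
def Ldist : Prop := ∀ x y z : Q, S.op x (S.op y z) = S.op (S.op x y) (S.op x z)

/-- A left quasigroup is faithful if the Cayley kernel is trivial. -/
def Faithful : Prop := ∀ x y : Q, (∀ z, S.op x z = S.op y z) → x = y

/-- Connected: `LMlt` acts transitively. -/
def Connected : Prop := ∀ x y : Q, ∃ h ∈ S.LMlt, h y = x

/-- Semiregular: `Dis` acts with trivial stabilizers. -/
def Semiregular : Prop := ∀ g ∈ S.Dis, ∀ x : Q, g x = x → g = 1

/-- Subalgebras. -/
def IsSubalgebra (A : Set Q) : Prop :=
  ∀ ⦃x⦄, x ∈ A → ∀ ⦃y⦄, y ∈ A → S.op x y ∈ A ∧ S.ld x y ∈ A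

/-- The left quasigroup structure on a subalgebra. -/
def subLQ (A : Set Q) (hA : S.IsSubalgebra A) : LeftQuasigroup A where
  op a b := ⟨S.op a b, (hA a.2 b.2).1⟩
  ld a b := ⟨S.ld a b, (hA a.2 b.2).2⟩
  op_ld a b := Subtype.ext (S.op_ld a b)
  ld_op a b := Subtype.ext (S.ld_op a b)

/-- Superconnected: every subalgebra is connected. -/
def Superconnected : Prop := ∀ (A : Set Q) (hA : S.IsSubalgebra A), (S.subLQ A hA).Connected

/-- Superfaithful: every subalgebra is faithful. -/
def Superfaithful : Prop := ∀ (A : Set Q) (hA : S.IsSubalgebra A), (S.subLQ A hA).Faithful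

theorem infCong {I : Type*} {α : I → Setoid Q} (hc : ∀ i, S.IsCongruence (α i)) :
    S.IsCongruence (infSetoid α) :=
  ⟨fun h1 h2 i => (hc i).op_compat (h1 i) (h2 i),
   fun h1 h2 i => (hc i).ld_compat (h1 i) (h2 i)⟩

end LeftQuasigroup

/-- Terms in the language of left quasigroups in `n` variables. -/
inductive LQTerm : ℕ → Type
  | var : ∀ {n}, Fin n → LQTerm n
  | op : ∀ {n}, LQTerm n → LQTerm n → LQTerm n
  | ld : ∀ {n}, LQTerm n → LQTerm n → LQTerm n

/-- Evaluation of terms. -/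
def evalT {Q : Type*} (S : LeftQuasigroup Q) : ∀ {n}, LQTerm n → (Fin n → Q) → Q
  | _, .var i, v => v i
  | _, .op t s, v => S.op (evalT S t v) (evalT S s v)
  | _, .ld t s, v => S.ld (evalT S t v) (evalT S s v)

/-- The centralizing relation `C(a, b; d)` of commutator theory. -/
def CC {Q : Type*} (S : LeftQuasigroup Q) (a b d : Q → Q → Prop) : Prop :=
  ∀ (n : ℕ) (t : LQTerm (n + 1)) (x y : Q) (z u : Fin n → Q),
    a x y → (∀ i, b (z i) (u i)) →
    d (evalT S t (Fin.cons x z)) (evalT S t (Fin.cons x u)) →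
    d (evalT S t (Fin.cons y z)) (evalT S t (Fin.cons y u))

/-- Nilpotency of length `n` in the sense of commutator theory: the ascending central
series (characterized congruence by congruence) reaches the full congruence at step `n`. -/
def LeftQuasigroup.NilpotentLength {Q : Type*} (S : LeftQuasigroup Q) (n : ℕ) : Prop :=
  ∃ c : ℕ → Setoid Q,
    (∀ k, S.IsCongruence (c k)) ∧
    (∀ x y : Q, (c 0).r x y ↔ x = y) ∧
    (∀ k, ∀ β : Setoid Q, S.IsCongruence β →
      (CC S β.r (fun _ _ => True) (c k).r ↔ β ≤ c (k + 1))) ∧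
    (∀ x y : Q, (c n).r x y)



namespace Stmt15Aux

inductive MT : Type
  | v : ℕ → MT
  | o : MT → MT → MT
  | l : MT → MT → MT

variable {Q : Type*}

def evalMT (S : LeftQuasigroup Q) : MT → (ℕ → Q) → Q
  | .v i, w => w i
  | .o a b, w => S.op (evalMT S a w) (evalMT S b w)
  | .l a b, w => S.ld (evalMT S a w) (evalMT S b w)

def MT.subst (σ : ℕ → MT) : MT → MT
  | .v i => σ i
  | .o a b => .o (a.subst σ) (b.subst σ)
  | .l a b => .l (a.subst σ) (b.subst σ)

theorem evalMT_subst (S : LeftQuasigroup Q) (σ : ℕ → MT) (t : MT) (w : ℕ → Q) :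
    evalMT S (t.subst σ) w = evalMT S t (fun i => evalMT S (σ i) w) := by
  induction t with
  | v i => rfl
  | o a b ha hb => simp [MT.subst, evalMT, ha, hb]
  | l a b ha hb => simp [MT.subst, evalMT, ha, hb]

def MT.bound : MT → ℕ
  | .v i => i + 1
  | .o a b => max a.bound b.bound
  | .l a b => max a.bound b.bound

theorem evalMT_congr (S : LeftQuasigroup Q) (t : MT) {v w : ℕ → Q}
    (h : ∀ i < t.bound, v i = w i) : evalMT S t v = evalMT S t w := by
  induction t with
  | v i => exact h i (Nat.lt_succ_self i)
  | o a b ha hb =>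
      simp only [evalMT]
      rw [ha (fun i hi => h i (lt_of_lt_of_le hi (le_max_left _ _))),
          hb (fun i hi => h i (lt_of_lt_of_le hi (le_max_right _ _)))]
  | l a b ha hb =>
      simp only [evalMT]
      rw [ha (fun i hi => h i (lt_of_lt_of_le hi (le_max_left _ _))),
          hb (fun i hi => h i (lt_of_lt_of_le hi (le_max_right _ _)))]

def MT.toLQ (n : ℕ) : MT → LQTerm (n + 1)
  | .v i => .var ⟨min i n, by omega⟩
  | .o a b => .op (a.toLQ n) (b.toLQ n)
  | .l a b => .ld (a.toLQ n) (b.toLQ n)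

theorem evalT_toLQ (S : LeftQuasigroup Q) (n : ℕ) (t : MT) (v : Fin (n + 1) → Q) :
    evalT S (t.toLQ n) v = evalMT S t (fun i => v ⟨min i n, by omega⟩) := by
  induction t with
  | v i => simp [MT.toLQ, evalT, evalMT]
  | o a b ha hb => simp [MT.toLQ, evalT, evalMT, ha, hb]
  | l a b ha hb => simp [MT.toLQ, evalT, evalMT, ha, hb]

def cons0 (s : Q) (z : ℕ → Q) : ℕ → Q
  | 0 => s
  | k + 1 => z k

/-- merged valuation: evens from `z`, odds from `z'`. -/
def mer (z z' : ℕ → Q) (k : ℕ) : Q := if k % 2 = 0 then z (k / 2) else z' (k / 2)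

def lft : ℕ → MT
  | 0 => .v 0
  | j + 1 => .v (2 * j + 1)

def rgt : ℕ → MT
  | 0 => .v 0
  | j + 1 => .v (2 * j + 2)

theorem eval_lft (S : LeftQuasigroup Q) (t : MT) (s : Q) (z z' : ℕ → Q) :
    evalMT S (t.subst lft) (cons0 s (mer z z')) = evalMT S t (cons0 s z) := by
  rw [evalMT_subst]
  congr 1
  funext i
  match i with
  | 0 => rfl
  | j + 1 =>
      show mer z z' (2 * j) = z j
      simp [mer, Nat.mul_mod_right, Nat.mul_div_cancel_left j (by norm_num : 0 < 2)]

theorem eval_rgt (S : LeftQuasigroup Q) (t : MT) (s : Q) (z z' : ℕ → Q) :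
    evalMT S (t.subst rgt) (cons0 s (mer z z')) = evalMT S t (cons0 s z') := by
  rw [evalMT_subst]
  congr 1
  funext i
  match i with
  | 0 => rfl
  | j + 1 =>
      show mer z z' (2 * j + 1) = z' j
      have h1 : (2 * j + 1) % 2 = 1 := by omega
      have h2 : (2 * j + 1) / 2 = j := by omega
      simp [mer, h1, h2]

end Stmt15Aux
namespace Stmt15Aux

variable {Q : Type*} {S : LeftQuasigroup Q} {b : Q → Q → Prop}

/-- A pair of unary functions represented by a single term with two pointwise
`b`-related parameter valuations. -/
def Rep2 (S : LeftQuasigroup Q) (b : Q → Q → Prop) (p q : Q → Q) : Prop :=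
  ∃ t : MT, ∃ z u : ℕ → Q, (∀ i, b (z i) (u i)) ∧
    (∀ s, p s = evalMT S t (cons0 s z)) ∧ ∀ s, q s = evalMT S t (cons0 s u)

theorem Rep2.ext {p q p' q' : Q → Q} (hp : ∀ s, p s = p' s) (hq : ∀ s, q s = q' s)
    (h : Rep2 S b p q) : Rep2 S b p' q' := by
  obtain ⟨t, z, u, hzu, h1, h2⟩ := h
  exact ⟨t, z, u, hzu, fun s => (hp s) ▸ h1 s, fun s => (hq s) ▸ h2 s⟩

theorem Rep2.id [Nonempty Q] (hrefl : ∀ x, b x x) : Rep2 S b id id :=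
  ⟨.v 0, fun _ => Classical.arbitrary Q, fun _ => Classical.arbitrary Q,
    fun _ => hrefl _, fun _ => rfl, fun _ => rfl⟩

theorem Rep2.const {c d : Q} (h : b c d) : Rep2 S b (fun _ => c) (fun _ => d) :=
  ⟨.v 1, fun _ => c, fun _ => d, fun _ => h, fun _ => rfl, fun _ => rfl⟩

theorem Rep2.swap (hsym : ∀ x y, b x y → b y x) {p q : Q → Q} (h : Rep2 S b p q) :
    Rep2 S b q p := by
  obtain ⟨t, z, u, hzu, h1, h2⟩ := h
  exact ⟨t, u, z, fun i => hsym _ _ (hzu i), h2, h1⟩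

theorem mer_rel {z u z' u' : ℕ → Q} (h : ∀ i, b (z i) (u i)) (h' : ∀ i, b (z' i) (u' i)) :
    ∀ i, b (mer z z' i) (mer u u' i) := by
  intro i
  unfold mer
  split <;> [exact h _; exact h' _]

theorem Rep2.op {p q p' q' : Q → Q} (h : Rep2 S b p q) (h' : Rep2 S b p' q') :
    Rep2 S b (fun s => S.op (p s) (p' s)) (fun s => S.op (q s) (q' s)) := by
  obtain ⟨t, z, u, hzu, h1, h2⟩ := h
  obtain ⟨t', z', u', hzu', h1', h2'⟩ := h'
  refine ⟨.o (t.subst lft) (t'.subst rgt), mer z z', mer u u', mer_rel hzu hzu', ?_, ?_⟩ <;>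
    intro s <;> simp only [evalMT, eval_lft, eval_rgt]
  · rw [h1, h1']
  · rw [h2, h2']

theorem Rep2.ld {p q p' q' : Q → Q} (h : Rep2 S b p q) (h' : Rep2 S b p' q') :
    Rep2 S b (fun s => S.ld (p s) (p' s)) (fun s => S.ld (q s) (q' s)) := by
  obtain ⟨t, z, u, hzu, h1, h2⟩ := h
  obtain ⟨t', z', u', hzu', h1', h2'⟩ := h'
  refine ⟨.l (t.subst lft) (t'.subst rgt), mer z z', mer u u', mer_rel hzu hzu', ?_, ?_⟩ <;>
    intro s <;> simp only [evalMT, eval_lft, eval_rgt]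
  · rw [h1, h1']
  · rw [h2, h2']

theorem Rep2.comp {p q p' q' : Q → Q} (h : Rep2 S b p q) (h' : Rep2 S b p' q') :
    Rep2 S b (fun s => p (p' s)) (fun s => q (q' s)) := by
  obtain ⟨t, z, u, hzu, h1, h2⟩ := h
  obtain ⟨t', z', u', hzu', h1', h2'⟩ := h'
  refine ⟨t.subst (fun i => match i with
            | 0 => t'.subst rgt
            | j + 1 => lft (j + 1)),
          mer z z', mer u u', mer_rel hzu hzu', ?_, ?_⟩
  · intro s
    show p (p' s) = _
    rw [evalMT_subst, h1 (p' s)]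
    congr 1
    funext i
    match i with
    | 0 =>
        show p' s = evalMT S (t'.subst rgt) (cons0 s (mer z z'))
        rw [eval_rgt]; exact h1' s
    | j + 1 =>
        show z j = mer z z' (2 * j)
        simp [mer, Nat.mul_mod_right, Nat.mul_div_cancel_left j (by norm_num : 0 < 2)]
  · intro s
    show q (q' s) = _
    rw [evalMT_subst, h2 (q' s)]
    congr 1
    funext i
    match i with
    | 0 =>
        show q' s = evalMT S (t'.subst rgt) (cons0 s (mer u u'))
        rw [eval_rgt]; exact h2' s
    | j + 1 =>
        show u j = mer u u' (2 * j)
        simp [mer, Nat.mul_mod_right, Nat.mul_div_cancel_left j (by norm_num : 0 < 2)]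

theorem cons_val {n : ℕ} (s : Q) (w : ℕ → Q) (i : ℕ) (h : i < n) :
    (Fin.cons s (fun j : Fin n => w j.val) : Fin (n + 1) → Q) ⟨min i n, by omega⟩
      = cons0 s w i := by
  have hmin : min i n = i := by omega
  cases i with
  | zero =>
      have h0 : (⟨min 0 n, by omega⟩ : Fin (n + 1)) = 0 := by ext; simpa using hmin
      rw [h0, Fin.cons_zero]
      rfl
  | succ j =>
      have h0 : (⟨min (j + 1) n, by omega⟩ : Fin (n + 1)) = Fin.succ ⟨j, by omega⟩ := by
        ext; simpa using hmin
      rw [h0, Fin.cons_succ]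
      rfl

theorem Rep2.cc {α : Setoid Q} (hC : CC S α.r b (fun x y => x = y)) {p q : Q → Q} {x y : Q}
    (h : Rep2 S b p q) (hxy : α.r x y) (hx : p x = q x) : p y = q y := by
  obtain ⟨t, z, u, hzu, hp, hq⟩ := h
  set n := t.bound with hn
  have key : ∀ (s : Q) (w : ℕ → Q),
      evalT S (t.toLQ n) (Fin.cons s (fun i : Fin n => w i.val)) = evalMT S t (cons0 s w) := by
    intro s w
    rw [evalT_toLQ]
    apply evalMT_congr
    intro i hi
    rw [← hn] at hi
    exact cons_val s w i hi
  have hx' : evalT S (t.toLQ n) (Fin.cons x (fun i : Fin n => z i.val)) =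
      evalT S (t.toLQ n) (Fin.cons x (fun i : Fin n => u i.val)) := by
    rw [key, key, ← hp, ← hq]; exact hx
  have hy' := hC n (t.toLQ n) x y _ _ hxy (fun i => hzu i.val) hx'
  rw [key, key, ← hp, ← hq] at hy'
  exact hy'

end Stmt15Aux
namespace Stmt15Aux

open LeftQuasigroup

variable {Q : Type*}

theorem L_apply (S : LeftQuasigroup Q) (x a : Q) : S.L x a = S.op x a := rfl

theorem L_inv_apply (S : LeftQuasigroup Q) (x a : Q) : (S.L x)⁻¹ a = S.ld x a := rfl

theorem lmlt_pair [Nonempty Q] (S : LeftQuasigroup Q) (b : Setoid Q) {m : Equiv.Perm Q}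
    (hm : m ∈ S.LMlt) : Rep2 S b.r ⇑m ⇑m ∧ Rep2 S b.r ⇑m⁻¹ ⇑m⁻¹ := by
  induction hm using Subgroup.closure_induction with
  | mem g hgen =>
    obtain ⟨c, rfl⟩ := hgen
    constructor
    · exact (((Rep2.const (b.refl c)).op (Rep2.id (fun x => b.refl x))).ext
        (fun s => rfl) (fun s => rfl))
    · exact (((Rep2.const (b.refl c)).ld (Rep2.id (fun x => b.refl x))).ext
        (fun s => rfl) (fun s => rfl))
  | one =>
    constructor <;>
      exact (Rep2.id (fun x => b.refl x)).ext (fun s => rfl) (fun s => rfl)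
  | mul m m' _ _ hm hm' =>
    constructor
    · exact (hm.1.comp hm'.1).ext (fun s => rfl) (fun s => rfl)
    · refine (hm'.2.comp hm.2).ext (fun s => ?_) (fun s => ?_) <;>
        · show m'⁻¹ (m⁻¹ s) = (m * m')⁻¹ s
          simp [mul_inv_rev]
  | inv m _ hm =>
    refine ⟨hm.2, hm.1.ext (fun s => ?_) (fun s => ?_)⟩ <;> simp

theorem dis_pair [Nonempty Q] (S : LeftQuasigroup Q) (b : Setoid Q) {f : Equiv.Perm Q}
    (hf : f ∈ S.disRel b.r) : Rep2 S b.r ⇑f id ∧ Rep2 S b.r ⇑f⁻¹ id := by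
  induction hf using Subgroup.closure_induction with
  | mem g hgen =>
    obtain ⟨h, hh, x, y, hxy, rfl⟩ := hgen
    have hL := lmlt_pair S b hh
    constructor
    · refine ((hL.1.comp (((Rep2.const hxy).op (Rep2.id (fun x => b.refl x))).comp
        (((Rep2.const (b.refl y)).ld (Rep2.id (fun x => b.refl x))).comp hL.2))).ext
        (fun s => ?_) (fun s => ?_))
      · show h (S.op x (S.ld y (h⁻¹ s))) = _
        simp [Equiv.Perm.mul_apply, L_apply, L_inv_apply]
      · show h (S.op y (S.ld y (h⁻¹ s))) = id s
        rw [S.op_ld]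
        exact Equiv.apply_symm_apply h s
    · refine ((hL.1.comp (((Rep2.const (b.symm hxy)).op (Rep2.id (fun x => b.refl x))).comp
        (((Rep2.const (b.refl x)).ld (Rep2.id (fun x => b.refl x))).comp hL.2))).ext
        (fun s => ?_) (fun s => ?_))
      · show h (S.op y (S.ld x (h⁻¹ s))) = _
        have hg : (h * (S.L x * (S.L y)⁻¹) * h⁻¹)⁻¹ = h * (S.L y * (S.L x)⁻¹) * h⁻¹ := by
          group
        rw [hg]
        simp [Equiv.Perm.mul_apply, L_apply, L_inv_apply]
      · show h (S.op x (S.ld x (h⁻¹ s))) = id s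
        rw [S.op_ld]
        exact Equiv.apply_symm_apply h s
  | one =>
    constructor <;>
      exact (Rep2.id (fun x => b.refl x)).ext (fun s => rfl) (fun s => rfl)
  | mul f f' _ _ hf hf' =>
    constructor
    · exact (hf.1.comp hf'.1).ext (fun s => rfl) (fun s => rfl)
    · refine (hf'.2.comp hf.2).ext (fun s => ?_) (fun s => rfl)
      show f'⁻¹ (f⁻¹ s) = (f * f')⁻¹ s
      simp [mul_inv_rev]
  | inv f _ hf =>
    refine ⟨hf.2, hf.1.ext (fun s => ?_) (fun s => rfl)⟩
    simp

theorem dis_ker (S : LeftQuasigroup Q) (b : Setoid Q) (hb : S.IsCongruence b)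
    {f : Equiv.Perm Q} (hf : f ∈ S.disRel b.r) : ∀ a, b.r (f a) a := by
  induction hf using Subgroup.closure_induction with
  | mem g hgen =>
    obtain ⟨h, hh, x, y, hxy, rfl⟩ := hgen
    intro a
    have h1 : b.r (S.op x (S.ld y (h⁻¹ a))) (S.op y (S.ld y (h⁻¹ a))) :=
      hb.op_compat hxy (b.refl _)
    have h2 := S.lmlt_maps hb hh _ _ h1
    rw [S.op_ld] at h2
    rw [show h (h⁻¹ a) = a from Equiv.apply_symm_apply h a] at h2
    have : (h * (S.L x * (S.L y)⁻¹) * h⁻¹) a = h (S.op x (S.ld y (h⁻¹ a))) := rfl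
    rw [this]
    exact h2
  | one => intro a; exact b.refl a
  | mul f f' _ _ hf hf' =>
    intro a
    exact b.trans (hf (f' a)) (hf' a)
  | inv f _ hf =>
    intro a
    have := hf (f⁻¹ a)
    rw [show f (f⁻¹ a) = a from Equiv.apply_symm_apply f a] at this
    exact b.symm this

end Stmt15Aux
namespace Stmt15Aux

open LeftQuasigroup

variable {Q : Type*}

theorem main [Nonempty Q] (S : LeftQuasigroup Q) (α b : Setoid Q)
    (hα : S.IsCongruence α) (hb : S.IsCongruence b)
    (hC : CC S α.r b.r (fun x y => x = y)) :
    (∀ g ∈ S.disRel α.r, ∀ h ∈ S.disRel b.r, g * h = h * g) ∧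
      ∀ x y : Q, α.r x y → pstab (S.disRel b.r) x = pstab (S.disRel b.r) y := by
  constructor
  · intro g hg
    induction hg using Subgroup.closure_induction with
    | mem g hgen =>
      obtain ⟨h, hh, x, y, hxy, rfl⟩ := hgen
      intro f hf
      ext a
      show (h * (S.L x * (S.L y)⁻¹) * h⁻¹) (f a) = f ((h * (S.L x * (S.L y)⁻¹) * h⁻¹) a)
      have hc : b.r (S.ld y (h⁻¹ (f a))) (S.ld y (h⁻¹ a)) :=
        hb.ld_compat (b.refl y)
          (S.lmlt_maps hb (inv_mem hh) _ _ (dis_ker S b hb hf a))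
      have hL := lmlt_pair S b hh
      have hF := (dis_pair S b hf).1
      have hrep : Rep2 S b.r
          (fun s => h (S.op s (S.ld y (h⁻¹ (f a)))))
          (fun s => f (h (S.op s (S.ld y (h⁻¹ a))))) := by
        refine ((hF.swap (fun _ _ hh => b.symm hh)).comp (hL.1.comp
          ((Rep2.id (fun x => b.refl x)).op (Rep2.const hc)))).ext
          (fun s => rfl) (fun s => rfl)
      have hy : (fun s => h (S.op s (S.ld y (h⁻¹ (f a))))) y
          = (fun s => f (h (S.op s (S.ld y (h⁻¹ a))))) y := by
        show h (S.op y (S.ld y (h⁻¹ (f a)))) = f (h (S.op y (S.ld y (h⁻¹ a))))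
        rw [S.op_ld, S.op_ld, show h (h⁻¹ (f a)) = f a from Equiv.apply_symm_apply h _,
          show h (h⁻¹ a) = a from Equiv.apply_symm_apply h _]
      have hx := hrep.cc hC (α.symm hxy) hy
      exact hx
    | one => intro f hf; rw [one_mul, mul_one]
    | mul g1 g2 _ _ h1 h2 =>
      intro f hf
      exact Commute.mul_left (h1 f hf) (h2 f hf)
    | inv g _ h =>
      intro f hf
      exact Commute.inv_left (h f hf)
  · intro x y hxy
    have stab : ∀ x y : Q, α.r x y → ∀ f ∈ S.disRel b.r, f x = x → f y = y := by
      intro x y hxy f hf hfx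
      exact (dis_pair S b hf).1.cc hC hxy hfx
    ext f
    simp only [pstab, Subgroup.mem_inf, MulAction.mem_stabilizer_iff, Equiv.Perm.smul_def]
    constructor
    · rintro ⟨hf, hfx⟩
      exact ⟨hf, stab x y hxy f hf hfx⟩
    · rintro ⟨hf, hfy⟩
      exact ⟨hf, stab y x (α.symm hxy) f hf hfy⟩

end Stmt15Aux

/-- if `C(α,β;0)` then `[Dis_α, Dis_β] = 1` and `α ≤ σ_{Dis_β}`;
in particular a central congruence has `Dis_α ≤ Z(Dis(Q))` and `α ≤ σ_Q`. -/
theorem stmt15 {Q : Type*} (S : LeftQuasigroup Q) (α β : Setoid Q)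
    (hα : S.IsCongruence α) (hβ : S.IsCongruence β)
    (hC : CC S α.r β.r (fun x y => x = y)) :
    ((∀ g ∈ S.disRel α.r, ∀ h ∈ S.disRel β.r, g * h = h * g) ∧
      ∀ x y : Q, α.r x y → pstab (S.disRel β.r) x = pstab (S.disRel β.r) y) ∧
    (CC S α.r (fun _ _ => True) (fun x y => x = y) →
      (∀ g ∈ S.disRel α.r, ∀ h ∈ S.Dis, g * h = h * g) ∧
      ∀ x y : Q, α.r x y → pstab S.Dis x = pstab S.Dis y) := by
  rcases isEmpty_or_nonempty Q with hQ | hQ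
  · refine ⟨⟨fun g _ f _ => Equiv.ext fun a => isEmptyElim a, fun x => isEmptyElim x⟩,
      fun _ => ⟨fun g _ f _ => Equiv.ext fun a => isEmptyElim a, fun x => isEmptyElim x⟩⟩
  · refine ⟨Stmt15Aux.main S α β hα hβ hC, fun hC' => ?_⟩
    exact Stmt15Aux.main S α
      ⟨fun _ _ => True, ⟨fun _ => trivial, fun _ => trivial, fun _ _ => trivial⟩⟩ hα
      ⟨fun _ _ => trivial, fun _ _ => trivial⟩ hC'
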